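/- arXiv:1004.0918 — 4 statements merged into one kernel-verified Lean document; each statement's English description precedes it below -/
import Mathlib

section
/- Let k be a commutative ring and A a non-unital k-algebra equipped with an internal ℕ-grading: k-submodules 𝒜ₙ (n ∈ ℕ) forming an internal direct sum decomposition A = ⊕ₙ 𝒜ₙ with 𝒜ₙ·𝒜ₘ ⊆ 𝒜ₙ₊ₘ. Then the inclusion ι : 𝒜₀ → A is an elementary homotopy equivalence: the degree-zero projection π : A → 𝒜₀ is a non-unital k-algebra homomorphism with π∘ι = id, and the map A → A[x] sending each homogeneous element aₙ ∈ 𝒜ₙ to aₙ·xⁿ is a non-unital k-algebra homomorphism exhibiting an elementary homotopy between ι∘π and id_A. -/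
noncomputable section

namespace NUPolyAux

/-! Auxiliary constructions at the level of finitely supported functions. -/

variable {R : Type*} [NonUnitalRing R]

/-- Convolution product of coefficient sequences. -/
def mulF (p q : ℕ →₀ R) : ℕ →₀ R :=
  p.sum fun i a => q.sum fun j b => Finsupp.single (i + j) (a * b)

/-- Interpretation of a coefficient sequence as a polynomial over the
unitization of `R`. -/
def toPUF (p : ℕ →₀ R) : Polynomial (Unitization ℤ R) :=
  p.sum fun i a => Polynomial.monomial i (Unitization.inr a)

theorem toPUF_single (i : ℕ) (a : R) :
    toPUF (Finsupp.single i a) = Polynomial.monomial i (Unitization.inr a) := by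
  rw [toPUF, Finsupp.sum_single_index]
  simp

theorem coeff_toPUF (p : ℕ →₀ R) (n : ℕ) :
    (toPUF p).coeff n = Unitization.inr (p n) := by
  classical
  rw [toPUF, Finsupp.sum, Polynomial.finset_sum_coeff]
  simp only [Polynomial.coeff_monomial]
  rw [Finset.sum_ite_eq' p.support n fun i => Unitization.inr (p i)]
  split
  · rfl
  · next h => rw [Finsupp.notMem_support_iff.mp h, Unitization.inr_zero]

theorem toPUF_injective : Function.Injective (toPUF (R := R)) := by
  intro p q h
  ext n
  apply Unitization.inr_injective (R := ℤ)
  rw [← coeff_toPUF, ← coeff_toPUF, h]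

theorem toPUF_zero : toPUF (0 : ℕ →₀ R) = 0 := by
  refine Polynomial.ext fun n => ?_
  rw [coeff_toPUF, Finsupp.zero_apply, Unitization.inr_zero, Polynomial.coeff_zero]

theorem toPUF_add (p q : ℕ →₀ R) : toPUF (p + q) = toPUF p + toPUF q := by
  refine Polynomial.ext fun n => ?_
  rw [coeff_toPUF, Polynomial.coeff_add, coeff_toPUF, coeff_toPUF,
    Finsupp.add_apply, Unitization.inr_add]

/-- `toPUF` as an additive monoid homomorphism. -/
def toPUFHom : (ℕ →₀ R) →+ Polynomial (Unitization ℤ R) where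
  toFun := toPUF
  map_zero' := toPUF_zero
  map_add' := toPUF_add

@[simp] theorem toPUFHom_apply (p : ℕ →₀ R) : toPUFHom p = toPUF p := rfl

theorem toPUF_mulF (p q : ℕ →₀ R) : toPUF (mulF p q) = toPUF p * toPUF q := by
  classical
  have h1 : toPUF (mulF p q)
      = p.sum fun i a => q.sum fun j b =>
          Polynomial.monomial (i + j) (Unitization.inr (a * b)) := by
    rw [mulF, ← toPUFHom_apply, map_finsuppSum]
    refine Finsupp.sum_congr fun i _ => ?_
    rw [map_finsuppSum]
    exact Finsupp.sum_congr fun j _ => toPUF_single _ _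
  rw [h1, toPUF, toPUF, Finsupp.sum_mul]
  refine Finsupp.sum_congr fun i _ => ?_
  rw [Finsupp.mul_sum]
  refine Finsupp.sum_congr fun j _ => ?_
  rw [Polynomial.monomial_mul_monomial, Unitization.inr_mul]

end NUPolyAux

/-- The non-unital polynomial algebra `R[x]` over a non-unital ring `R`:
the type of finitely supported coefficient sequences (i.e. of
`AddMonoidAlgebra R ℕ`) equipped with the convolution product. -/
structure NUPoly (R : Type*) [NonUnitalRing R] where
  /-- the coefficient sequence of a non-unital polynomial -/
  toFinsupp : ℕ →₀ R

namespace NUPoly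

open NUPolyAux

variable {R : Type*} [NonUnitalRing R]

theorem toFinsupp_injective :
    Function.Injective (toFinsupp : NUPoly R → (ℕ →₀ R)) := by
  rintro ⟨p⟩ ⟨q⟩ h
  simpa using h

instance instZero : Zero (NUPoly R) := ⟨⟨0⟩⟩
instance instAdd : Add (NUPoly R) := ⟨fun p q => ⟨p.toFinsupp + q.toFinsupp⟩⟩
instance instNeg : Neg (NUPoly R) := ⟨fun p => ⟨-p.toFinsupp⟩⟩
instance instSub : Sub (NUPoly R) := ⟨fun p q => ⟨p.toFinsupp - q.toFinsupp⟩⟩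
instance instSMul {S : Type*} [SMulZeroClass S R] : SMul S (NUPoly R) :=
  ⟨fun c p => ⟨c • p.toFinsupp⟩⟩
instance instMul : Mul (NUPoly R) := ⟨fun p q => ⟨mulF p.toFinsupp q.toFinsupp⟩⟩

@[simp] theorem toFinsupp_zero : (0 : NUPoly R).toFinsupp = 0 := rfl
@[simp] theorem toFinsupp_add (p q : NUPoly R) :
    (p + q).toFinsupp = p.toFinsupp + q.toFinsupp := rfl
@[simp] theorem toFinsupp_smul {S : Type*} [SMulZeroClass S R] (c : S) (p : NUPoly R) :
    (c • p).toFinsupp = c • p.toFinsupp := rfl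
@[simp] theorem toFinsupp_mul (p q : NUPoly R) :
    (p * q).toFinsupp = mulF p.toFinsupp q.toFinsupp := rfl

instance instAddCommGroup : AddCommGroup (NUPoly R) :=
  toFinsupp_injective.addCommGroup toFinsupp rfl (fun _ _ => rfl) (fun _ => rfl)
    (fun _ _ => rfl) (fun _ _ => rfl) (fun _ _ => rfl)

/-- The interpretation of `p ∈ R[x]` as a polynomial over the unitization of `R`. -/
def toPU (p : NUPoly R) : Polynomial (Unitization ℤ R) := toPUF p.toFinsupp

theorem toPU_injective : Function.Injective (toPU (R := R)) :=
  fun _ _ h => toFinsupp_injective (toPUF_injective h)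

theorem toPU_zero : toPU (0 : NUPoly R) = 0 := toPUF_zero
theorem toPU_add (p q : NUPoly R) : toPU (p + q) = toPU p + toPU q := toPUF_add _ _
theorem toPU_mul (p q : NUPoly R) : toPU (p * q) = toPU p * toPU q := toPUF_mulF _ _

instance instNonUnitalRing : NonUnitalRing (NUPoly R) :=
  { instAddCommGroup, instMul with
    left_distrib := fun p q r => toPU_injective <| by
      rw [toPU_mul, toPU_add, toPU_add, toPU_mul, toPU_mul, mul_add]
    right_distrib := fun p q r => toPU_injective <| by
      rw [toPU_mul, toPU_add, toPU_add, toPU_mul, toPU_mul, add_mul]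
    zero_mul := fun p => toPU_injective <| by
      rw [toPU_mul, toPU_zero, zero_mul]
    mul_zero := fun p => toPU_injective <| by
      rw [toPU_mul, toPU_zero, mul_zero]
    mul_assoc := fun p q r => toPU_injective <| by
      rw [toPU_mul, toPU_mul, toPU_mul, toPU_mul, mul_assoc] }

theorem mul_def (p q : NUPoly R) :
    (p * q).toFinsupp
      = p.toFinsupp.sum fun i a => q.toFinsupp.sum fun j b =>
          Finsupp.single (i + j) (a * b) := rfl

theorem mul_apply (p q : NUPoly R) (n : ℕ) :
    (p * q).toFinsupp n = ∑ x ∈ Finset.HasAntidiagonal.antidiagonal n, p.toFinsupp x.1 * q.toFinsupp x.2 := by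
  apply Unitization.inr_injective (R := ℤ)
  have h : (Unitization.inr ((p * q).toFinsupp n) : Unitization ℤ R)
      = ∑ x ∈ Finset.HasAntidiagonal.antidiagonal n,
          (Unitization.inr (p.toFinsupp x.1) * Unitization.inr (q.toFinsupp x.2) :
            Unitization ℤ R) := by
    rw [← coeff_toPUF, ← toPU, toPU_mul, Polynomial.coeff_mul]
    exact Finset.sum_congr rfl fun x _ => by
      rw [toPU, toPU, coeff_toPUF, coeff_toPUF]
  rw [h]
  simp only [← Unitization.inr_mul]
  exact (map_sum (Unitization.inrHom ℤ ℤ R) (fun x : ℕ × ℕ => p.toFinsupp x.1 * q.toFinsupp x.2)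
    (Finset.HasAntidiagonal.antidiagonal n)).symm

section Module

variable {k : Type*} [Semiring k] [Module k R]

/-- `toFinsupp` as an additive monoid homomorphism. -/
def toFinsuppAddHom : NUPoly R →+ (ℕ →₀ R) where
  toFun := toFinsupp
  map_zero' := rfl
  map_add' := fun _ _ => rfl

instance instModule : Module k (NUPoly R) :=
  Function.Injective.module k toFinsuppAddHom toFinsupp_injective fun _ _ => rfl

end Module

section Scalars

variable (k : Type*) [CommRing k] [Module k R]

instance instIsScalarTower [IsScalarTower k R R] :
    IsScalarTower k (NUPoly R) (NUPoly R) := by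
  refine ⟨fun c p q => ?_⟩
  rw [smul_eq_mul, smul_eq_mul]
  apply toFinsupp_injective
  simp only [toFinsupp_mul, toFinsupp_smul]
  rw [mulF, mulF, Finsupp.sum_smul_index' (by simp), Finsupp.smul_sum]
  refine Finsupp.sum_congr fun i _ => ?_
  rw [Finsupp.smul_sum]
  refine Finsupp.sum_congr fun j _ => ?_
  rw [smul_mul_assoc, Finsupp.smul_single]

instance instSMulCommClass [SMulCommClass k R R] :
    SMulCommClass k (NUPoly R) (NUPoly R) := by
  refine ⟨fun c p q => ?_⟩
  rw [smul_eq_mul, smul_eq_mul]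
  apply toFinsupp_injective
  simp only [toFinsupp_mul, toFinsupp_smul]
  rw [mulF, mulF, Finsupp.smul_sum]
  refine Finsupp.sum_congr fun i _ => ?_
  rw [Finsupp.sum_smul_index' (by simp), Finsupp.smul_sum]
  refine Finsupp.sum_congr fun j _ => ?_
  rw [mul_smul_comm, Finsupp.smul_single]

end Scalars

/-- The non-unital polynomial `r·xⁱ`. -/
def single (i : ℕ) (a : R) : NUPoly R := ⟨Finsupp.single i a⟩

/-- Evaluation at `x = 0` (the constant coefficient), as a non-unital algebra
homomorphism `∂⁰ : R[x] → R`. -/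
def atZero (k R : Type*) [CommRing k] [NonUnitalRing R] [Module k R] :
    NUPoly R →ₙₐ[k] R where
  toFun p := p.toFinsupp 0
  map_add' p q := by
    show (p + q).toFinsupp 0 = p.toFinsupp 0 + q.toFinsupp 0
    rw [toFinsupp_add, Finsupp.add_apply]
  map_smul' c p := by
    show (c • p).toFinsupp 0 = c • p.toFinsupp 0
    rw [toFinsupp_smul, Finsupp.smul_apply]
  map_zero' := rfl
  map_mul' p q := by
    show (p * q).toFinsupp 0 = p.toFinsupp 0 * q.toFinsupp 0
    rw [mul_apply, Finset.Nat.antidiagonal_zero, Finset.sum_singleton]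

/-- Evaluation at `x = 1` (the sum of the coefficients), as a non-unital algebra
homomorphism `∂¹ : R[x] → R`. -/
def coeffSum (k R : Type*) [CommRing k] [NonUnitalRing R] [Module k R] :
    NUPoly R →ₙₐ[k] R where
  toFun p := p.toFinsupp.sum fun _ a => a
  map_add' p q := by
    show ((p + q).toFinsupp.sum fun _ a => a)
      = (p.toFinsupp.sum fun _ a => a) + q.toFinsupp.sum fun _ a => a
    rw [toFinsupp_add]
    exact Finsupp.sum_add_index' (fun _ => rfl) (fun _ _ _ => rfl)
  map_smul' c p := by
    show ((c • p).toFinsupp.sum fun _ a => a) = c • p.toFinsupp.sum fun _ a => a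
    rw [toFinsupp_smul]
    have h1 : ((c • p.toFinsupp).sum fun _ a => a) = p.toFinsupp.sum fun _ a => c • a :=
      Finsupp.sum_smul_index' (h := fun (_ : ℕ) (a : R) => a) (fun _ => rfl)
    have h2 : (c • p.toFinsupp.sum fun _ a => a) = p.toFinsupp.sum fun _ a => c • a :=
      Finsupp.smul_sum
    rw [h1, h2]
  map_zero' := by
    show ((0 : NUPoly R).toFinsupp.sum fun _ a => a) = 0
    rw [toFinsupp_zero]
    exact Finsupp.sum_zero_index
  map_mul' p q := by
    classical
    show ((p * q).toFinsupp.sum fun _ a => a)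
      = (p.toFinsupp.sum fun _ a => a) * q.toFinsupp.sum fun _ a => a
    rw [mul_def, Finsupp.sum_sum_index (fun _ => rfl) (fun _ _ _ => rfl)]
    have h1 : (p.toFinsupp.sum fun i a =>
          (q.toFinsupp.sum fun j b => Finsupp.single (i + j) (a * b)).sum fun _ c => c)
        = p.toFinsupp.sum fun i a => q.toFinsupp.sum fun j b => a * b := by
      refine Finsupp.sum_congr fun i _ => ?_
      rw [Finsupp.sum_sum_index (fun _ => rfl) (fun _ _ _ => rfl)]
      exact Finsupp.sum_congr fun j _ => Finsupp.sum_single_index rfl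
    have h2 : (p.toFinsupp.sum fun i a => q.toFinsupp.sum fun j b => a * b)
        = p.toFinsupp.sum fun i a => a * q.toFinsupp.sum fun _ b => b :=
      Finsupp.sum_congr fun i _ => (Finsupp.mul_sum _ _).symm
    rw [h1, h2, ← Finsupp.sum_mul]

@[simp] theorem atZero_apply (k : Type*) [CommRing k] [Module k R] (p : NUPoly R) :
    atZero k R p = p.toFinsupp 0 := rfl

@[simp] theorem coeffSum_apply (k : Type*) [CommRing k] [Module k R] (p : NUPoly R) :
    coeffSum k R p = p.toFinsupp.sum fun _ a => a := rfl

end NUPoly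

section Homotopy

variable (k : Type*) [CommRing k]
variable {A B : Type*} [NonUnitalRing A] [Module k A] [NonUnitalRing B] [Module k B]

/-- Two non-unital algebra homomorphisms `f₀ f₁ : A → B` are *elementary homotopic*
if there is a homomorphism `H : A → B[x]` with `∂⁰ ∘ H = f₀` and `∂¹ ∘ H = f₁`. -/
def ElemHomotopic (f₀ f₁ : A →ₙₐ[k] B) : Prop :=
  ∃ H : A →ₙₐ[k] NUPoly B,
    (NUPoly.atZero k B).comp H = f₀ ∧ (NUPoly.coeffSum k B).comp H = f₁

/-- *Homotopy* of non-unital algebra homomorphisms: the equivalence relation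
generated by elementary homotopy. -/
def NUHomotopic (f₀ f₁ : A →ₙₐ[k] B) : Prop :=
  Relation.EqvGen (ElemHomotopic k) f₀ f₁

end Homotopy

section GradedAux

variable {k : Type*} [CommRing k] {A : Type*}
  [NonUnitalRing A] [Module k A] [SMulCommClass k A A] [IsScalarTower k A A]

theorem NUPoly.single_mul (i j : ℕ) (a b : A) :
    NUPoly.single i a * NUPoly.single j b = NUPoly.single (i + j) (a * b) := by
  apply NUPoly.toFinsupp_injective
  rw [NUPoly.toFinsupp_mul]
  show NUPolyAux.mulF (Finsupp.single i a) (Finsupp.single j b) = Finsupp.single (i + j) (a * b)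
  rw [NUPolyAux.mulF, Finsupp.sum_single_index (by simp), Finsupp.sum_single_index (by simp)]

variable (k A) in
/-- `a ↦ a·xⁿ` on the `n`-th graded piece, as a linear map. -/
def gradedSingleLin (𝒜 : ℕ → Submodule k A) (n : ℕ) : 𝒜 n →ₗ[k] NUPoly A where
  toFun a := NUPoly.single n (a : A)
  map_add' a b := by
    apply NUPoly.toFinsupp_injective
    simp [NUPoly.single, Finsupp.single_add]
  map_smul' c a := by
    apply NUPoly.toFinsupp_injective
    simp [NUPoly.single, Finsupp.smul_single]

variable (k A) in
/-- The linear map `A → A[x]` sending `aₙ ∈ 𝒜 n` to `aₙ·xⁿ`. -/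
def gradedHLin (𝒜 : ℕ → Submodule k A) [DirectSum.Decomposition 𝒜] : A →ₗ[k] NUPoly A :=
  (DirectSum.toModule k ℕ (NUPoly A) (gradedSingleLin k A 𝒜)).comp
    (DirectSum.decomposeLinearEquiv 𝒜).toLinearMap

theorem gradedHLin_of_mem (𝒜 : ℕ → Submodule k A) [DirectSum.Decomposition 𝒜]
    {n : ℕ} {a : A} (ha : a ∈ 𝒜 n) :
    gradedHLin k A 𝒜 a = NUPoly.single n a := by
  have : gradedHLin k A 𝒜 a
      = DirectSum.toModule k ℕ (NUPoly A) (gradedSingleLin k A 𝒜)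
          (DirectSum.decompose 𝒜 a) := rfl
  rw [this, DirectSum.decompose_of_mem 𝒜 ha, ← DirectSum.lof_eq_of k,
    DirectSum.toModule_lof]
  rfl

theorem gradedHLin_mul (𝒜 : ℕ → Submodule k A) [SetLike.GradedMul 𝒜]
    [DirectSum.Decomposition 𝒜] (a b : A) :
    gradedHLin k A 𝒜 (a * b) = gradedHLin k A 𝒜 a * gradedHLin k A 𝒜 b := by
  induction a using DirectSum.Decomposition.inductionOn 𝒜 with
  | zero => simp
  | @homogeneous n x =>
    induction b using DirectSum.Decomposition.inductionOn 𝒜 with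
    | zero => simp
    | @homogeneous m y =>
      rw [gradedHLin_of_mem 𝒜 x.2, gradedHLin_of_mem 𝒜 y.2,
        gradedHLin_of_mem 𝒜 (SetLike.mul_mem_graded x.2 y.2), NUPoly.single_mul]
    | add b c hb hc => rw [mul_add, map_add, map_add, mul_add, hb, hc]
  | add a c ha hc => rw [add_mul, map_add, map_add, add_mul, ha, hc]

variable (k A) in
/-- The homotopy `A → A[x]` as a non-unital algebra homomorphism. -/
def gradedH (𝒜 : ℕ → Submodule k A) [SetLike.GradedMul 𝒜] [DirectSum.Decomposition 𝒜] :
    A →ₙₐ[k] NUPoly A where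
  toFun := gradedHLin k A 𝒜
  map_add' := map_add _
  map_zero' := map_zero _
  map_smul' := map_smul _
  map_mul' := gradedHLin_mul 𝒜

end GradedAux

/-- Let `k` be a commutative ring and `A` a non-unital
`k`-algebra equipped with an internal `ℕ`-grading: `k`-submodules `𝒜 n`
forming an internal direct sum decomposition `A = ⊕ₙ 𝒜 n` with
`𝒜 n * 𝒜 m ⊆ 𝒜 (n + m)`.  Then the inclusion `ι : 𝒜 0 → A` is an elementary
homotopy equivalence: the degree-zero projection `π : A → 𝒜 0` is a non-unital
`k`-algebra homomorphism with `π ∘ ι = id` (here encoded by the composite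
`e = ι ∘ π : A → A`, a non-unital algebra homomorphism sending `a` to its
degree-zero component, which is the identity on `𝒜 0`), and the map `A → A[x]`
sending each homogeneous element `aₙ ∈ 𝒜 n` to `aₙ·xⁿ` is a non-unital
`k`-algebra homomorphism exhibiting an elementary homotopy between `ι ∘ π` and
`id`. -/
theorem graded_inclusion_elementary_homotopy_equivalence
    (k : Type*) [CommRing k] (A : Type*)
    [NonUnitalRing A] [Module k A] [SMulCommClass k A A] [IsScalarTower k A A]
    (𝒜 : ℕ → Submodule k A) [SetLike.GradedMul 𝒜] [DirectSum.Decomposition 𝒜] :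
    ∃ e : A →ₙₐ[k] A,
      (∀ a : A, e a = (DirectSum.decompose 𝒜 a 0 : A)) ∧
      (∀ a ∈ 𝒜 0, e a = a) ∧
      ∃ H : A →ₙₐ[k] NUPoly A,
        (∀ (n : ℕ), ∀ a ∈ 𝒜 n, H a = NUPoly.single n a) ∧
        (NUPoly.atZero k A).comp H = e ∧
        (NUPoly.coeffSum k A).comp H = NonUnitalAlgHom.id k A := by
  classical
  set H : A →ₙₐ[k] NUPoly A := gradedH k A 𝒜 with hH
  have hHmem : ∀ (n : ℕ), ∀ a ∈ 𝒜 n, H a = NUPoly.single n a := fun n a ha =>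
    gradedHLin_of_mem 𝒜 ha
  refine ⟨(NUPoly.atZero k A).comp H, ?_, ?_, H, hHmem, rfl, ?_⟩
  · intro a
    induction a using DirectSum.Decomposition.inductionOn 𝒜 with
    | zero => simp
    | @homogeneous n x =>
      rw [NonUnitalAlgHom.comp_apply, hHmem n x x.2]
      show (Finsupp.single n (x : A)) 0 = _
      by_cases h : n = 0
      · subst h
        rw [Finsupp.single_eq_same, DirectSum.decompose_of_mem_same 𝒜 x.2]
      · rw [Finsupp.single_eq_of_ne' h, DirectSum.decompose_of_mem_ne 𝒜 x.2 h]
    | add a b ha hb =>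
      rw [map_add, ha, hb, DirectSum.decompose_add, DirectSum.add_apply,
        Submodule.coe_add]
  · intro a ha
    rw [NonUnitalAlgHom.comp_apply, hHmem 0 a ha]
    show (Finsupp.single 0 a) 0 = a
    simp
  · ext a
    rw [NonUnitalAlgHom.comp_apply]
    induction a using DirectSum.Decomposition.inductionOn 𝒜 with
    | zero => simp
    | @homogeneous n x =>
      rw [hHmem n x x.2]
      show (Finsupp.single n (x : A)).sum (fun _ a => a) = (x : A)
      exact Finsupp.sum_single_index rfl
    | add a b ha hb => rw [map_add, map_add, ha, hb]; rfl
end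
end

section
/- Let k be a commutative ring and M a k-module. There exists a (unique) k-algebra homomorphism τ : TensorAlgebra k M → Polynomial (TensorAlgebra k M) with τ(ι m) = C(ι m)·X for all m ∈ M, and it satisfies: (i) for every a ∈ TensorAlgebra k M, the sum of the coefficients of τ(a) (evaluation at X = 1) equals a; (ii) the constant coefficient of τ(a) (evaluation at X = 0) equals algebraMap k (TensorAlgebra k M) (ε a), where ε is the augmentation. In particular, for every a in the augmentation ideal ker ε (the non-unital tensor algebra T(M) = ⊕_{n≥1} M^{⊗n}), the constant coefficient of τ(a) is 0 while its coefficient sum is a, so τ is a polynomial contraction of ker ε: the zero map and the identity of ker ε are elementary homotopic. Moreover τ is natural: for every k-linear map g : M → N one has Polynomial.map(T(g)) ∘ τ_M = τ_N ∘ T(g), where T(g) : TensorAlgebra k M → TensorAlgebra k N is the induced algebra homomorphism with T(g)(ι m) = ι(g m). -/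
noncomputable section

/-- The augmentation ideal `ker ε ⊆ TensorAlgebra k M` (the non-unital tensor
algebra `T(M) = ⊕_{n ≥ 1} M^⊗ⁿ`), as a non-unital subalgebra.  Here
`ε = TensorAlgebra.algebraMapInv` is the augmentation, the unique `k`-algebra
homomorphism with `ε ∘ ι = 0`. -/
noncomputable def augIdeal (k : Type*) [CommRing k] (M : Type*) [AddCommGroup M]
    [Module k M] : NonUnitalSubalgebra k (TensorAlgebra k M) where
  carrier := {a | TensorAlgebra.algebraMapInv (M := M) a = 0}
  add_mem' := fun {p q} hp hq => by
    simp only [Set.mem_setOf_eq] at *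
    rw [map_add, hp, hq, add_zero]
  zero_mem' := by simp only [Set.mem_setOf_eq, map_zero]
  mul_mem' := fun {p q} hp hq => by
    simp only [Set.mem_setOf_eq] at *
    rw [map_mul, hp, zero_mul]
  smul_mem' := fun c p hp => by
    simp only [Set.mem_setOf_eq] at *
    rw [map_smul, hp, smul_zero]

set_option maxHeartbeats 2000000 in
/-- Let `k` be a commutative ring and `M` a `k`-module.
There exists a (unique) `k`-algebra homomorphism
`τ : TensorAlgebra k M → Polynomial (TensorAlgebra k M)` with
`τ (ι m) = C (ι m) * X` for all `m : M`, and it satisfies: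
(i) for every `a`, the sum of the coefficients of `τ a` (evaluation at `X = 1`)
equals `a`;
(ii) the constant coefficient of `τ a` (evaluation at `X = 0`) equals
`algebraMap k (TensorAlgebra k M) (ε a)`, where `ε` is the augmentation.
In particular, for every `a ∈ ker ε`, the constant coefficient of `τ a` is `0`
while its coefficient sum is `a`, so `τ` is a polynomial contraction of
`ker ε`: the zero map and the identity of `ker ε` are elementary homotopic.
Moreover `τ` is natural: for every `k`-linear map `g : M → N` one has
`Polynomial.map (T g) ∘ τ_M = τ_N ∘ T g`, where `T g` is the induced algebra
homomorphism with `T g (ι m) = ι (g m)`. -/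
theorem tensorAlgebra_polynomial_contraction
    (k : Type*) [CommRing k] (M : Type*) [AddCommGroup M] [Module k M] :
    ∃ τ : TensorAlgebra k M →ₐ[k] Polynomial (TensorAlgebra k M),
      -- defining property
      (∀ m : M, τ (TensorAlgebra.ι k m)
        = Polynomial.C (TensorAlgebra.ι k m) * Polynomial.X) ∧
      -- uniqueness
      (∀ τ' : TensorAlgebra k M →ₐ[k] Polynomial (TensorAlgebra k M),
        (∀ m : M, τ' (TensorAlgebra.ι k m)
          = Polynomial.C (TensorAlgebra.ι k m) * Polynomial.X) → τ' = τ) ∧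
      -- (i)
      (∀ a : TensorAlgebra k M, (τ a).eval 1 = a) ∧
      -- (ii)
      (∀ a : TensorAlgebra k M,
        (τ a).coeff 0
          = algebraMap k (TensorAlgebra k M) (TensorAlgebra.algebraMapInv a)) ∧
      -- the contraction of the augmentation ideal induced by `τ`:
      -- zero and the identity of `ker ε` are elementary homotopic
      (∃ Hc : augIdeal k M →ₙₐ[k] NUPoly (augIdeal k M),
        (∀ (a : augIdeal k M) (i : ℕ),
          (((Hc a).toFinsupp i : augIdeal k M) : TensorAlgebra k M)
            = (τ (a : TensorAlgebra k M)).coeff i) ∧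
        (NUPoly.atZero k (augIdeal k M)).comp Hc = 0 ∧
        (NUPoly.coeffSum k (augIdeal k M)).comp Hc
          = NonUnitalAlgHom.id k (augIdeal k M)) ∧
      -- naturality
      (∀ (N : Type*) [AddCommGroup N] [Module k N] (g : M →ₗ[k] N)
        (τN : TensorAlgebra k N →ₐ[k] Polynomial (TensorAlgebra k N)),
        (∀ m : N, τN (TensorAlgebra.ι k m)
          = Polynomial.C (TensorAlgebra.ι k m) * Polynomial.X) →
        ∀ a : TensorAlgebra k M,
          Polynomial.map
            (TensorAlgebra.lift k ((TensorAlgebra.ι k (M := N)).comp g)).toRingHom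
            (τ a)
            = τN (TensorAlgebra.lift k ((TensorAlgebra.ι k (M := N)).comp g) a)) := by
  classical
  -- the defining linear map
  set L : M →ₗ[k] Polynomial (TensorAlgebra k M) :=
    { toFun := fun m => Polynomial.C (TensorAlgebra.ι k m) * Polynomial.X
      map_add' := fun x y => by
        show Polynomial.C (TensorAlgebra.ι k (x + y)) * Polynomial.X = _
        rw [map_add, map_add, add_mul]
      map_smul' := fun c x => by
        show Polynomial.C (TensorAlgebra.ι k (c • x)) * Polynomial.X = _
        rw [map_smul, ← Polynomial.smul_C, smul_mul_assoc]
        rfl } with hL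
  set τ : TensorAlgebra k M →ₐ[k] Polynomial (TensorAlgebra k M) :=
    TensorAlgebra.lift k L with hτdef
  have hτ : ∀ m : M, τ (TensorAlgebra.ι k m)
      = Polynomial.C (TensorAlgebra.ι k m) * Polynomial.X := fun m => by
    rw [hτdef, TensorAlgebra.lift_ι_apply]
    rfl
  -- (i)
  have hi : ∀ a : TensorAlgebra k M, (τ a).eval 1 = a := by
    have key : (Polynomial.eval₂AlgHom (AlgHom.id k (TensorAlgebra k M)) 1
          (fun a => Commute.one_right _)).comp τ
        = AlgHom.id k (TensorAlgebra k M) := by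
      apply TensorAlgebra.hom_ext
      ext m
      simp only [LinearMap.coe_comp, Function.comp_apply, AlgHom.toLinearMap_apply,
        AlgHom.comp_apply, Polynomial.eval₂AlgHom_apply, hτ m]
      rw [Polynomial.eval₂_mul_X, Polynomial.eval₂_C, mul_one]
      rfl
    intro a
    have h1 := DFunLike.congr_fun key a
    rw [AlgHom.comp_apply, Polynomial.eval₂AlgHom_apply, AlgHom.id_apply,
      AlgHom.id_toRingHom] at h1
    exact h1
  -- (ii)
  have hii : ∀ a : TensorAlgebra k M,
      (τ a).coeff 0 = algebraMap k (TensorAlgebra k M) (TensorAlgebra.algebraMapInv a) := by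
    have key : (Polynomial.eval₂AlgHom (AlgHom.id k (TensorAlgebra k M)) 0
          (fun a => Commute.zero_right _)).comp τ
        = (Algebra.ofId k (TensorAlgebra k M)).comp (TensorAlgebra.algebraMapInv) := by
      apply TensorAlgebra.hom_ext
      ext m
      simp only [LinearMap.coe_comp, Function.comp_apply, AlgHom.toLinearMap_apply,
        AlgHom.comp_apply, Polynomial.eval₂AlgHom_apply, hτ m]
      rw [Polynomial.eval₂_mul_X, mul_zero, TensorAlgebra.algebraMapInv,
        TensorAlgebra.lift_ι_apply]
      simp [Algebra.ofId_apply]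
    intro a
    have h1 := DFunLike.congr_fun key a
    rw [AlgHom.comp_apply, Polynomial.eval₂AlgHom_apply, AlgHom.id_toRingHom,
      AlgHom.comp_apply, Algebra.ofId_apply] at h1
    rw [Polynomial.coeff_zero_eq_eval_zero]
    exact h1
  -- ε applied to each coefficient
  have hcoeffε : ∀ (a : TensorAlgebra k M) (i : ℕ),
      TensorAlgebra.algebraMapInv ((τ a).coeff i)
        = if i = 0 then TensorAlgebra.algebraMapInv a else 0 := by
    have key : (Polynomial.mapAlgHom (TensorAlgebra.algebraMapInv (M := M))).comp τ
        = (Polynomial.CAlgHom).comp (TensorAlgebra.algebraMapInv) := by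
      apply TensorAlgebra.hom_ext
      ext m
      simp only [LinearMap.coe_comp, Function.comp_apply, AlgHom.toLinearMap_apply,
        AlgHom.comp_apply, hτ m]
      have h0 : TensorAlgebra.algebraMapInv (TensorAlgebra.ι k m) = (0 : k) := by
        rw [TensorAlgebra.algebraMapInv, TensorAlgebra.lift_ι_apply]
        rfl
      rw [map_mul]
      simp [Polynomial.mapAlgHom, Polynomial.CAlgHom, h0]
    intro a i
    have h1 := congrArg (fun p => Polynomial.coeff p i) (DFunLike.congr_fun key a)
    simpa [Polynomial.coeff_map, Polynomial.coeff_C] using h1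
  have hmem : ∀ (a : augIdeal k M) (i : ℕ),
      (τ (a : TensorAlgebra k M)).coeff i ∈ augIdeal k M := by
    intro a i
    show TensorAlgebra.algebraMapInv ((τ (a : TensorAlgebra k M)).coeff i) = 0
    rw [hcoeffε]
    have ha : TensorAlgebra.algebraMapInv (a : TensorAlgebra k M) = 0 := a.2
    rw [ha]
    split <;> rfl
  -- coefficient sequence in the augmentation ideal
  set F : augIdeal k M → (ℕ →₀ augIdeal k M) := fun a =>
    ⟨(τ (a : TensorAlgebra k M)).support,
      fun i => ⟨(τ (a : TensorAlgebra k M)).coeff i, hmem a i⟩,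
      fun i => by
        simp only [Polynomial.mem_support_iff, ne_eq, Subtype.ext_iff,
          ZeroMemClass.coe_zero]⟩ with hF
  have hFcoe : ∀ (a : augIdeal k M) (i : ℕ),
      ((F a i : augIdeal k M) : TensorAlgebra k M) = (τ (a : TensorAlgebra k M)).coeff i :=
    fun a i => rfl
  have Fzero : F (0 : augIdeal k M) = 0 := Finsupp.ext fun i => Subtype.ext <| by
    rw [hFcoe, Finsupp.zero_apply]
    simp
  have Fadd : ∀ a b : augIdeal k M, F (a + b) = F a + F b := fun a b =>
    Finsupp.ext fun i => Subtype.ext <| by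
      rw [Finsupp.add_apply, AddMemClass.coe_add, hFcoe, hFcoe, hFcoe, AddMemClass.coe_add,
        map_add, Polynomial.coeff_add]
  have Fsmul : ∀ (c : k) (a : augIdeal k M), F (c • a) = c • F a := fun c a =>
    Finsupp.ext fun i => Subtype.ext <| by
      rw [Finsupp.smul_apply, SetLike.val_smul, hFcoe, hFcoe, SetLike.val_smul, map_smul,
        Polynomial.coeff_smul]
  have Fmul : ∀ a b : augIdeal k M,
      (⟨F (a * b)⟩ : NUPoly (augIdeal k M)) = ⟨F a⟩ * ⟨F b⟩ := fun a b => by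
    apply NUPoly.toFinsupp_injective
    refine Finsupp.ext fun n => Subtype.ext ?_
    have h2 := NUPoly.mul_apply (⟨F a⟩ : NUPoly (augIdeal k M)) ⟨F b⟩ n
    show ((F (a * b) n : augIdeal k M) : TensorAlgebra k M)
      = (((⟨F a⟩ : NUPoly (augIdeal k M)) * ⟨F b⟩).toFinsupp n : TensorAlgebra k M)
    rw [h2, hFcoe, AddSubmonoidClass.coe_finset_sum, MulMemClass.coe_mul, map_mul,
      Polynomial.coeff_mul]
    exact Finset.sum_congr rfl fun x _ => by
      rw [MulMemClass.coe_mul]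
      show _ = ((F a x.1 : augIdeal k M) : TensorAlgebra k M)
        * ((F b x.2 : augIdeal k M) : TensorAlgebra k M)
      rw [hFcoe, hFcoe]
  obtain ⟨Hc, hHcapp⟩ : ∃ Hc : augIdeal k M →ₙₐ[k] NUPoly (augIdeal k M),
      ∀ a, Hc a = ⟨F a⟩ :=
    ⟨{ toFun := fun a => ⟨F a⟩
       map_zero' := congrArg NUPoly.mk Fzero
       map_add' := fun a b => congrArg NUPoly.mk (Fadd a b)
       map_smul' := fun c a => congrArg NUPoly.mk (Fsmul c a)
       map_mul' := fun a b => Fmul a b }, fun a => rfl⟩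
  refine ⟨τ, hτ, ?_, hi, hii, ⟨Hc, fun a i => by rw [hHcapp]; exact hFcoe a i, ?_, ?_⟩, ?_⟩
  · -- uniqueness
    intro τ' h
    apply TensorAlgebra.hom_ext
    ext m
    simp [h m, hτ m]
  · -- atZero ∘ Hc = 0
    refine NonUnitalAlgHom.ext fun a => ?_
    rw [NonUnitalAlgHom.comp_apply, hHcapp, NUPoly.atZero_apply, NonUnitalAlgHom.zero_apply]
    refine Subtype.ext ?_
    show ((F a 0 : augIdeal k M) : TensorAlgebra k M) = ((0 : augIdeal k M) : TensorAlgebra k M)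
    rw [hFcoe, hii]
    have ha : TensorAlgebra.algebraMapInv (a : TensorAlgebra k M) = 0 := a.2
    rw [ha, map_zero, ZeroMemClass.coe_zero]
  · -- coeffSum ∘ Hc = id
    refine NonUnitalAlgHom.ext fun a => ?_
    rw [NonUnitalAlgHom.comp_apply, hHcapp, NUPoly.coeffSum_apply]
    refine Subtype.ext ?_
    show (((F a).sum fun _ x => x : augIdeal k M) : TensorAlgebra k M)
      = ((NonUnitalAlgHom.id k (augIdeal k M) a : augIdeal k M) : TensorAlgebra k M)
    rw [Finsupp.sum, AddSubmonoidClass.coe_finset_sum]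
    have h1 : ∑ i ∈ (F a).support, ((F a i : augIdeal k M) : TensorAlgebra k M)
        = ∑ i ∈ (τ (a : TensorAlgebra k M)).support,
            (τ (a : TensorAlgebra k M)).coeff i := by
      refine Finset.sum_congr rfl fun i _ => hFcoe a i
    have h2 : ((NonUnitalAlgHom.id k (augIdeal k M) a : augIdeal k M) : TensorAlgebra k M)
        = (a : TensorAlgebra k M) := rfl
    have h3 : Polynomial.eval 1 (τ (a : TensorAlgebra k M))
        = ∑ i ∈ (τ (a : TensorAlgebra k M)).support, (τ (a : TensorAlgebra k M)).coeff i := by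
      rw [Polynomial.eval_eq_sum, Polynomial.sum_def]
      simp
    rw [h1, h2, ← h3, hi]
  · -- naturality
    intro N _ _ g τN hτN a
    have hTgι : ∀ m : M,
        TensorAlgebra.lift k ((TensorAlgebra.ι k (M := N)).comp g) (TensorAlgebra.ι k m)
          = TensorAlgebra.ι k (g m) := fun m => by
      rw [TensorAlgebra.lift_ι_apply]
      rfl
    have key : (Polynomial.mapAlgHom
          (TensorAlgebra.lift k ((TensorAlgebra.ι k (M := N)).comp g))).comp τ
        = τN.comp (TensorAlgebra.lift k ((TensorAlgebra.ι k (M := N)).comp g)) := by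
      apply TensorAlgebra.hom_ext
      ext m
      simp only [LinearMap.coe_comp, Function.comp_apply, AlgHom.toLinearMap_apply,
        AlgHom.comp_apply, hτ m, AlgHom.coe_toRingHom, hTgι m, hτN (g m), map_mul,
        Polynomial.coe_mapAlgHom, Polynomial.map_C, Polynomial.map_X]
    have h1 := DFunLike.congr_fun key a
    rw [AlgHom.comp_apply, AlgHom.comp_apply] at h1
    exact h1
end
end

section
/- Fix n ≥ 0 and indices i < j in Fin (n+2). There exists a k-algebra homomorphism φ_{i,j} : Sₙ₊₁ → Polynomial Sₙ determined on the generators by φ_{i,j}(t_k) = C t_k for k < i; φ_{i,j}(t_i) = X·C t_i; φ_{i,j}(t_k) = X·C t_k + (1 − X)·C t_{k−1} for i < k < j; φ_{i,j}(t_j) = (1 − X)·C t_{j−1}; and φ_{i,j}(t_k) = C t_{k−1} for k > j. Moreover, evaluation at X = 0 composed with φ_{i,j} equals the face map ∂ᵢ, and evaluation at X = 1 composed with φ_{i,j} equals the face map ∂ⱼ. In particular any two face maps ∂ᵢ, ∂ⱼ : Sₙ₊₁ → Sₙ are elementarily (polynomially) homotopic. -/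
noncomputable section

open MvPolynomial Polynomial

/-- The coordinate ring `Sₙ = k[Δⁿ]` of the algebraic `n`-simplex:
`k[t₀, …, tₙ] / (1 - Σᵢ tᵢ)`. -/
abbrev SimplexAlg (k : Type*) [CommRing k] (n : ℕ) : Type _ :=
  MvPolynomial (Fin (n + 1)) k ⧸
    Ideal.span {(1 : MvPolynomial (Fin (n + 1)) k) - ∑ i : Fin (n + 1), MvPolynomial.X i}

/-- The generator `tᵢ` of `Sₙ` (the image of the variable `Xᵢ`). -/
def simplexVar (k : Type*) [CommRing k] (n : ℕ) (i : Fin (n + 1)) : SimplexAlg k n :=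
  Ideal.Quotient.mk _ (MvPolynomial.X i)

/-- An index `m < i` of `Fin (n+2)` reindexed in `Fin (n+1)` (for the faces of the
`(n+1)`-simplex). -/
def finOfLT {n : ℕ} (i m : Fin (n + 2)) (h : m < i) : Fin (n + 1) :=
  ⟨m.val, lt_of_lt_of_le h (Nat.lt_succ_iff.mp i.isLt)⟩

/-- The index `m - 1` of `Fin (n+1)`, for `m : Fin (n+2)`. -/
def finPred {n : ℕ} (m : Fin (n + 2)) : Fin (n + 1) :=
  ⟨m.val - 1, Nat.lt_succ_of_le (Nat.sub_le_sub_right (Nat.lt_succ_iff.mp m.isLt) 1)⟩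

set_option maxHeartbeats 1000000

/-- Fix `n ≥ 0` and indices `i < j` in `Fin (n+2)`, and let
`∂ᵢ, ∂ⱼ : Sₙ₊₁ → Sₙ` be the face maps, i.e. the `k`-algebra homomorphisms
determined on the generators by `∂ᵢ(t_m) = t_m` for `m < i`, `∂ᵢ(t_i) = 0`, and
`∂ᵢ(t_m) = t_{m-1}` for `m > i` (and similarly for `j`).  Then there exists a
`k`-algebra homomorphism `φ_{i,j} : Sₙ₊₁ → Polynomial Sₙ` determined on the
generators by
`φ(t_m) = C t_m` for `m < i`; `φ(t_i) = X · C t_i`;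
`φ(t_m) = X · C t_m + (1 - X) · C t_{m-1}` for `i < m < j`;
`φ(t_j) = (1 - X) · C t_{j-1}`; `φ(t_m) = C t_{m-1}` for `m > j`;
and evaluation at `X = 0` composed with `φ` equals `∂ᵢ`, while evaluation at
`X = 1` composed with `φ` equals `∂ⱼ`.  In particular any two face maps are
elementarily (polynomially) homotopic. -/
theorem simplex_face_maps_polynomially_homotopic
    (k : Type*) [CommRing k] (n : ℕ) (i j : Fin (n + 2)) (hij : i < j)
    (Fi Fj : SimplexAlg k (n + 1) →ₐ[k] SimplexAlg k n)
    -- `Fi` is the `i`-th face map: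
    (hFi_lt : ∀ (m : Fin (n + 2)) (h : m < i),
      Fi (simplexVar k (n + 1) m) = simplexVar k n (finOfLT i m h))
    (hFi_eq : Fi (simplexVar k (n + 1) i) = 0)
    (hFi_gt : ∀ (m : Fin (n + 2)), i < m →
      Fi (simplexVar k (n + 1) m) = simplexVar k n (finPred m))
    -- `Fj` is the `j`-th face map:
    (hFj_lt : ∀ (m : Fin (n + 2)) (h : m < j),
      Fj (simplexVar k (n + 1) m) = simplexVar k n (finOfLT j m h))
    (hFj_eq : Fj (simplexVar k (n + 1) j) = 0)
    (hFj_gt : ∀ (m : Fin (n + 2)), j < m →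
      Fj (simplexVar k (n + 1) m) = simplexVar k n (finPred m)) :
    ∃ φ : SimplexAlg k (n + 1) →ₐ[k] Polynomial (SimplexAlg k n),
      (∀ (m : Fin (n + 2)) (h : m < i),
        φ (simplexVar k (n + 1) m) = Polynomial.C (simplexVar k n (finOfLT i m h))) ∧
      (φ (simplexVar k (n + 1) i)
        = Polynomial.X * Polynomial.C (simplexVar k n (finOfLT j i hij))) ∧
      (∀ (m : Fin (n + 2)) (h₁ : i < m) (h₂ : m < j),
        φ (simplexVar k (n + 1) m)
          = Polynomial.X * Polynomial.C (simplexVar k n (finOfLT j m h₂))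
            + (1 - Polynomial.X) * Polynomial.C (simplexVar k n (finPred m))) ∧
      (φ (simplexVar k (n + 1) j)
        = (1 - Polynomial.X) * Polynomial.C (simplexVar k n (finPred j))) ∧
      (∀ (m : Fin (n + 2)), j < m →
        φ (simplexVar k (n + 1) m) = Polynomial.C (simplexVar k n (finPred m))) ∧
      (∀ a : SimplexAlg k (n + 1), (φ a).eval 0 = Fi a) ∧
      (∀ a : SimplexAlg k (n + 1), (φ a).eval 1 = Fj a) := by

  classical
  set I : Ideal (MvPolynomial (Fin (n + 2)) k) :=
    Ideal.span {(1 : MvPolynomial (Fin (n + 2)) k) - ∑ m : Fin (n + 2), MvPolynomial.X m} with hI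
  -- the sum of the generators is 1 in the quotient
  have hT : (∑ m : Fin (n + 2), simplexVar k (n + 1) m) = 1 := by
    have h0 : Ideal.Quotient.mk I
        ((1 : MvPolynomial (Fin (n + 2)) k) - ∑ m : Fin (n + 2), MvPolynomial.X m) = 0 :=
      Ideal.Quotient.eq_zero_iff_mem.mpr (Ideal.subset_span rfl)
    have := h0
    rw [map_sub, map_one, map_sum, sub_eq_zero] at this
    simpa [simplexVar] using this.symm
  -- the candidate values of φ on the generators
  set v : Fin (n + 2) → Polynomial (SimplexAlg k n) := fun m =>
    Polynomial.X * Polynomial.C (Fj (simplexVar k (n + 1) m))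
      + (1 - Polynomial.X) * Polynomial.C (Fi (simplexVar k (n + 1) m)) with hv
  set g : MvPolynomial (Fin (n + 2)) k →ₐ[k] Polynomial (SimplexAlg k n) :=
    MvPolynomial.aeval v with hg
  have hgen : g ((1 : MvPolynomial (Fin (n + 2)) k) - ∑ m : Fin (n + 2), MvPolynomial.X m) = 0 := by
    rw [map_sub, map_one, map_sum]
    simp only [hg, MvPolynomial.aeval_X, hv]
    rw [Finset.sum_add_distrib, ← Finset.mul_sum, ← Finset.mul_sum, ← map_sum, ← map_sum,
      ← map_sum, ← map_sum, hT, map_one, map_one, map_one, map_one]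
    ring
  have hgI : ∀ a ∈ I, g a = 0 := by
    intro a ha
    rw [hI, Ideal.mem_span_singleton] at ha
    obtain ⟨c, hc⟩ := ha
    rw [hc, map_mul, hgen, zero_mul]
  refine ⟨Ideal.Quotient.liftₐ I g hgI, ?_⟩
  have hφ : ∀ m : Fin (n + 2),
      Ideal.Quotient.liftₐ I g hgI (simplexVar k (n + 1) m) = v m := by
    intro m
    simp [simplexVar, hg]
    exact (Ideal.Quotient.lift_mk _ _ _).trans (MvPolynomial.aeval_X _ _)
  have hφ' : ∀ p : MvPolynomial (Fin (n + 2)) k,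
      Ideal.Quotient.liftₐ I g hgI (Ideal.Quotient.mk I p) = g p := by
    intro p; exact Ideal.Quotient.lift_mk _ _ _
  have hv0 : ∀ m : Fin (n + 2), (v m).eval 0 = Fi (simplexVar k (n + 1) m) := by
    intro m
    simp only [hv]
    rw [Polynomial.eval_add, Polynomial.eval_mul, Polynomial.eval_mul, Polynomial.eval_X,
      Polynomial.eval_C, Polynomial.eval_sub, Polynomial.eval_one, Polynomial.eval_X,
      Polynomial.eval_C]
    ring
  have hv1 : ∀ m : Fin (n + 2), (v m).eval 1 = Fj (simplexVar k (n + 1) m) := by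
    intro m
    simp only [hv]
    rw [Polynomial.eval_add, Polynomial.eval_mul, Polynomial.eval_mul, Polynomial.eval_X,
      Polynomial.eval_C, Polynomial.eval_sub, Polynomial.eval_one, Polynomial.eval_X,
      Polynomial.eval_C]
    ring
  have hC : ∀ a : k, (Ideal.Quotient.mk I (MvPolynomial.C a))
      = algebraMap k (SimplexAlg k (n + 1)) a := fun a => rfl
  refine ⟨?_, ?_, ?_, ?_, ?_, ?_, ?_⟩
  · intro m h
    rw [hφ m]; simp only [hv]
    rw [hFi_lt m h, hFj_lt m (h.trans hij)]
    have : finOfLT j m (h.trans hij) = finOfLT i m h := rfl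
    rw [this]; ring
  · rw [hφ i]; simp only [hv]
    rw [hFi_eq, hFj_lt i hij, Polynomial.C_0, mul_zero, add_zero]
  · intro m h₁ h₂
    rw [hφ m]; simp only [hv]
    rw [hFi_gt m h₁, hFj_lt m h₂]
  · rw [hφ j]; simp only [hv]
    rw [hFj_eq, hFi_gt j hij, Polynomial.C_0, mul_zero, zero_add]
  · intro m h
    rw [hφ m]; simp only [hv]
    rw [hFi_gt m (hij.trans h), hFj_gt m h]
    ring
  · intro a
    obtain ⟨p, rfl⟩ := Ideal.Quotient.mk_surjective a
    rw [hφ']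
    induction p using MvPolynomial.induction_on with
    | C a =>
        rw [hg, MvPolynomial.aeval_C, hC, AlgHom.commutes, Polynomial.algebraMap_apply,
          Polynomial.eval_C]
    | add p q hp hq =>
        rw [map_add (Ideal.Quotient.mk I), map_add, map_add, Polynomial.eval_add, hp, hq]
    | mul_X p m hp =>
        rw [map_mul (Ideal.Quotient.mk I), map_mul, map_mul, Polynomial.eval_mul, hp]
        congr 1
        rw [hg, MvPolynomial.aeval_X]
        exact hv0 m
  · intro a
    obtain ⟨p, rfl⟩ := Ideal.Quotient.mk_surjective a
    rw [hφ']
    induction p using MvPolynomial.induction_on with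
    | C a =>
        rw [hg, MvPolynomial.aeval_C, hC, AlgHom.commutes, Polynomial.algebraMap_apply,
          Polynomial.eval_C]
    | add p q hp hq =>
        rw [map_add (Ideal.Quotient.mk I), map_add, map_add, Polynomial.eval_add, hp, hq]
    | mul_X p m hp =>
        rw [map_mul (Ideal.Quotient.mk I), map_mul, map_mul, Polynomial.eval_mul, hp]
        congr 1
        rw [hg, MvPolynomial.aeval_X]
        exact hv1 m
end
end

section
/- Let A be a simplicial unital k-algebra with underlying simplicial set X, and suppose there exists a 1-simplex t ∈ A₁ with d₀(t) = 0 and d₁(t) = 1. Then X is simplicially contractible to the vertex 0 ∈ A₀: there is a morphism of simplicial sets h : Δ[1] × X → X, given in degree n by h(α, a) = (α*(t))·a for α ∈ Δ[1]ₙ (i.e. α : [n] → [1]) and a ∈ Aₙ, whose restriction along the vertex 0 of Δ[1] is the identity of X and whose restriction along the vertex 1 of Δ[1] is the constant map at the vertex 0 ∈ A₀. -/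
noncomputable section

open CategoryTheory Opposite

/-- Let `A` be a simplicial unital `k`-algebra (a functor
`SimplexCategoryᵒᵖ ⥤ AlgebraCat k`) and suppose there exists a `1`-simplex
`t ∈ A₁` with `d₀ t = 0` and `d₁ t = 1`.  Then the underlying simplicial set of
`A` is simplicially contractible to the vertex `0 ∈ A₀`: there is a morphism of
simplicial sets `h : Δ[1] × X → X`, given in degree `n` by
`h (α, a) = (α* t) * a` for `α : [n] ⟶ [1]` and `a ∈ Aₙ` (here encoded as a
family of maps `(n.unop ⟶ [1]) → A.obj n → A.obj n` natural in
`n : SimplexCategoryᵒᵖ`), whose restriction along the vertex `0` of `Δ[1]` is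
the identity and whose restriction along the vertex `1` of `Δ[1]` is the
constant map at the vertex `0 ∈ A₀`. -/
theorem simplicial_algebra_contractible
    (k : Type*) [CommRing k]
    (A : SimplexCategoryᵒᵖ ⥤ AlgCat k)
    (t : A.obj (op (SimplexCategory.mk 1)))
    (ht0 : A.map (SimplexCategory.δ (0 : Fin 2)).op t = 0)
    (ht1 : A.map (SimplexCategory.δ (1 : Fin 2)).op t = 1) :
    ∃ h : ∀ n : SimplexCategoryᵒᵖ, (n.unop ⟶ SimplexCategory.mk 1) → A.obj n → A.obj n,
      -- the defining formula `h (α, a) = (α* t) * a`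
      (∀ (n : SimplexCategoryᵒᵖ) (α : n.unop ⟶ SimplexCategory.mk 1) (a : A.obj n),
        h n α a = A.map α.op t * a) ∧
      -- `h` is a morphism of simplicial sets `Δ[1] × X → X` (naturality)
      (∀ (n m : SimplexCategoryᵒᵖ) (f : n ⟶ m) (α : n.unop ⟶ SimplexCategory.mk 1)
        (a : A.obj n),
        h m (f.unop ≫ α) (A.map f a) = A.map f (h n α a)) ∧
      -- restriction along the vertex `0` of `Δ[1]` is the identity of `X`
      (∀ (n : SimplexCategoryᵒᵖ) (a : A.obj n),
        h n (SimplexCategory.const n.unop (SimplexCategory.mk 1) 0) a = a) ∧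
      -- restriction along the vertex `1` of `Δ[1]` is constant at the vertex `0 ∈ A₀`
      (∀ (n : SimplexCategoryᵒᵖ) (a : A.obj n),
        h n (SimplexCategory.const n.unop (SimplexCategory.mk 1) 1) a
          = A.map (SimplexCategory.const n.unop (SimplexCategory.mk 0) 0).op
              (0 : A.obj (op (SimplexCategory.mk 0)))) := by
  classical
  refine ⟨fun n α a => A.map α.op t * a, fun _ _ _ => rfl, ?_, ?_, ?_⟩
  · intro n m f α a
    have : A.map (f.unop ≫ α).op t = A.map f (A.map α.op t) := by
      rw [op_comp, A.map_comp]; rfl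
    dsimp only
    rw [this, map_mul]
  · intro n a
    have hc : SimplexCategory.const n.unop (SimplexCategory.mk 1) 0
        = SimplexCategory.const n.unop (SimplexCategory.mk 0) 0 ≫ SimplexCategory.δ (1 : Fin 2) := by
      rw [SimplexCategory.const_comp]; rfl
    rw [hc]
    have : A.map (SimplexCategory.const n.unop (SimplexCategory.mk 0) 0 ≫ SimplexCategory.δ (1 : Fin 2)).op t
        = A.map (SimplexCategory.const n.unop (SimplexCategory.mk 0) 0).op
            (A.map (SimplexCategory.δ (1 : Fin 2)).op t) := by
      rw [op_comp, A.map_comp]; rfl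
    dsimp only
    rw [this, ht1, map_one, one_mul]
  · intro n a
    have hc : SimplexCategory.const n.unop (SimplexCategory.mk 1) 1
        = SimplexCategory.const n.unop (SimplexCategory.mk 0) 0 ≫ SimplexCategory.δ (0 : Fin 2) := by
      rw [SimplexCategory.const_comp]; rfl
    rw [hc]
    have : A.map (SimplexCategory.const n.unop (SimplexCategory.mk 0) 0 ≫ SimplexCategory.δ (0 : Fin 2)).op t
        = A.map (SimplexCategory.const n.unop (SimplexCategory.mk 0) 0).op
            (A.map (SimplexCategory.δ (0 : Fin 2)).op t) := by
      rw [op_comp, A.map_comp]; rfl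
    dsimp only
    rw [this, ht0, map_zero, zero_mul]
end
end
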